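/- If a finite set of nonnegative reals each strictly less than 3/8 cannot be partitioned into two parts each of total sum at least 3/8, and the greedy procedure (repeatedly placing the largest remaining number into the currently smallest of three bins) is applied, then the result is a partition into three parts each of total sum strictly less than 3/8. -/

import Mathlib

/-- One step of the greedy 3-bin procedure: add `x` to the bin with the smallest total. -/
noncomputable def greedyStep (b : ℝ × ℝ × ℝ) (x : ℝ) : ℝ × ℝ × ℝ :=
  if b.1 ≤ b.2.1 ∧ b.1 ≤ b.2.2 then (b.1 + x, b.2.1, b.2.2)
  else if b.2.1 ≤ b.2.2 then (b.1, b.2.1 + x, b.2.2)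
  else (b.1, b.2.1, b.2.2 + x)

/-- The greedy 3-bin procedure: process the numbers in order, always adding to the bin
with the smallest current total, starting from three empty bins. -/
noncomputable def greedy (xs : List ℝ) : ℝ × ℝ × ℝ := xs.foldl greedyStep (0, 0, 0)

def Good (xs : List ℝ) : Prop :=
  ∃ la lb lc : List ℝ, (la ++ lb ++ lc).Perm xs ∧
    la.sum = (greedy xs).1 ∧ lb.sum = (greedy xs).2.1 ∧ lc.sum = (greedy xs).2.2 ∧
    (greedy xs).1 < 3/8 ∧ (greedy xs).2.1 < 3/8 ∧ (greedy xs).2.2 < 3/8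

lemma perm_mid (x : ℝ) (la lb lc : List ℝ) :
    ((x :: lb) ++ (la ++ lc)).Perm (x :: (la ++ lb ++ lc)) := by
  refine List.Perm.cons x ?_
  refine List.perm_append_comm.trans ?_
  rw [List.append_assoc]
  refine (List.Perm.append_left la List.perm_append_comm).trans ?_
  simp [List.append_assoc]

lemma perm_last (x : ℝ) (la lb lc : List ℝ) :
    ((x :: lc) ++ (la ++ lb)).Perm (x :: (la ++ lb ++ lc)) := by
  refine List.Perm.cons x ?_
  exact List.perm_append_comm

lemma perm_mid' (x : ℝ) (la lb lc : List ℝ) :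
    (la ++ (x :: lb) ++ lc).Perm (x :: (la ++ lb ++ lc)) := by
  rw [List.append_assoc]
  refine List.perm_middle.trans (List.Perm.cons x ?_)
  simp [List.append_assoc]

lemma good_small (xs : List ℝ) (hlen : xs.length ≤ 3)
    (hpos : ∀ x ∈ xs, 0 < x) (hsmall : ∀ x ∈ xs, x < 3/8) : Good xs := by
  match xs with
  | [] =>
    exact ⟨[], [], [], by simp [greedy], by simp [greedy], by simp [greedy],
      by simp [greedy], by norm_num [greedy], by norm_num [greedy], by norm_num [greedy]⟩
  | [a] =>
    have ha := hpos a (by simp)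
    have ha' := hsmall a (by simp)
    have s1 : greedyStep (0,0,0) a = (a, 0, 0) := by simp [greedyStep]
    have h1 : greedy [a] = (a, 0, 0) := by simp only [greedy, List.foldl, s1]
    exact ⟨[a], [], [], by simp, by simp [h1], by simp [h1], by simp [h1],
      by rw [h1]; exact ha', by rw [h1]; norm_num, by rw [h1]; norm_num⟩
  | [a, b] =>
    have ha := hpos a (by simp)
    have hb := hpos b (by simp)
    have ha' := hsmall a (by simp)
    have hb' := hsmall b (by simp)
    have s1 : greedyStep (0,0,0) a = (a, 0, 0) := by simp [greedyStep]
    have s2 : greedyStep (a,0,0) b = (a, b, 0) := by simp [greedyStep, not_le.mpr ha]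
    have h1 : greedy [a, b] = (a, b, 0) := by simp only [greedy, List.foldl, s1, s2]
    exact ⟨[a], [b], [], by simp, by simp [h1], by simp [h1], by simp [h1],
      by rw [h1]; exact ha', by rw [h1]; exact hb', by rw [h1]; norm_num⟩
  | [a, b, c] =>
    have ha := hpos a (by simp)
    have hb := hpos b (by simp)
    have hc := hpos c (by simp)
    have ha' := hsmall a (by simp)
    have hb' := hsmall b (by simp)
    have hc' := hsmall c (by simp)
    have s1 : greedyStep (0,0,0) a = (a, 0, 0) := by simp [greedyStep]
    have s2 : greedyStep (a,0,0) b = (a, b, 0) := by simp [greedyStep, not_le.mpr ha]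
    have s3 : greedyStep (a,b,0) c = (a, b, c) := by
      simp [greedyStep, not_le.mpr ha, not_le.mpr hb]
    have h1 : greedy [a, b, c] = (a, b, c) := by simp only [greedy, List.foldl, s1, s2, s3]
    exact ⟨[a], [b], [c], by simp, by simp [h1], by simp [h1], by simp [h1],
      by rw [h1]; exact ha', by rw [h1]; exact hb', by rw [h1]; exact hc'⟩
  | _ :: _ :: _ :: _ :: _ => simp at hlen; omega

lemma good_main : ∀ xs : List ℝ,
    xs.Pairwise (fun a b => b ≤ a) →
    (∀ x ∈ xs, 0 ≤ x) →
    (∀ x ∈ xs, x < 3 / 8) →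
    (¬ ∃ s t : List ℝ, (s ++ t).Perm xs ∧ 3 / 8 ≤ s.sum ∧ 3 / 8 ≤ t.sum) →
    Good xs := by
  intro xs
  induction xs using List.reverseRecOn with
  | nil =>
    intro _ _ _ _
    exact ⟨[], [], [], by simp [greedy], by simp [greedy], by simp [greedy],
      by simp [greedy], by norm_num [greedy], by norm_num [greedy], by norm_num [greedy]⟩
  | append_singleton ys x ih =>
    intro hsorted hnn hsmall hno2
    have hsort' : ys.Pairwise (fun a b => b ≤ a) ∧ ∀ y ∈ ys, x ≤ y := by
      rw [List.pairwise_append] at hsorted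
      exact ⟨hsorted.1, fun y hy => hsorted.2.2 y hy x (by simp)⟩
    have hx0 : 0 ≤ x := hnn x (by simp)
    have hx8 : x < 3/8 := hsmall x (by simp)
    by_cases hx16 : x ≤ 3/16
    · -- inductive case
      have hno2' : ¬ ∃ s t : List ℝ, (s ++ t).Perm ys ∧ 3 / 8 ≤ s.sum ∧ 3 / 8 ≤ t.sum := by
        rintro ⟨s, t, hp, hs, ht⟩
        refine hno2 ⟨x :: s, t, ?_, by simp; linarith, ht⟩
        exact (hp.cons x).trans (List.perm_append_singleton x ys).symm
      obtain ⟨la, lb, lc, hperm, hLa, hLb, hLc, ha, hb, hc⟩ :=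
        ih hsort'.1 (fun y hy => hnn y (by simp [hy])) (fun y hy => hsmall y (by simp [hy])) hno2'
      set r := greedy ys with hr
      have hg : greedy (ys ++ [x]) = greedyStep r x := by
        rw [hr]; show (ys ++ [x]).foldl greedyStep (0,0,0) = _
        rw [List.foldl_append]; rfl
      have hperm' : ∀ l : List ℝ, l.Perm (x :: (la ++ lb ++ lc)) → l.Perm (ys ++ [x]) := by
        intro l hl
        exact hl.trans ((hperm.cons x).trans (List.perm_append_singleton x ys).symm)
      by_cases h1 : r.1 ≤ r.2.1 ∧ r.1 ≤ r.2.2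
      · have hstep : greedyStep r x = (r.1 + x, r.2.1, r.2.2) := by rw [greedyStep, if_pos h1]
        have hlt : r.1 + x < 3/8 := by
          by_contra hge
          push_neg at hge
          exact hno2 ⟨x :: la, lb ++ lc, hperm' _ (by simp),
            by simp [hLa]; linarith,
            by simp [hLb, hLc]; linarith [h1.1, h1.2]⟩
        exact ⟨x :: la, lb, lc, hperm' _ (by simp), by simp [hg, hstep, hLa]; ring,
          by simp [hg, hstep, hLb], by simp [hg, hstep, hLc],
          by rw [hg, hstep]; exact hlt, by rw [hg, hstep]; exact hb, by rw [hg, hstep]; exact hc⟩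
      · by_cases h2 : r.2.1 ≤ r.2.2
        · have hstep : greedyStep r x = (r.1, r.2.1 + x, r.2.2) := by
            rw [greedyStep, if_neg h1, if_pos h2]
          have hba : r.2.1 ≤ r.1 := by
            rcases not_and_or.mp h1 with h | h <;> push_neg at h <;> linarith
          have hlt : r.2.1 + x < 3/8 := by
            by_contra hge
            push_neg at hge
            exact hno2 ⟨x :: lb, la ++ lc, hperm' _ (perm_mid x la lb lc),
              by simp [hLb]; linarith,
              by simp [hLa, hLc]; linarith⟩
          exact ⟨la, x :: lb, lc, hperm' _ (perm_mid' x la lb lc), by simp [hg, hstep, hLa],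
            by simp [hg, hstep, hLb]; ring, by simp [hg, hstep, hLc],
            by rw [hg, hstep]; exact ha, by rw [hg, hstep]; exact hlt, by rw [hg, hstep]; exact hc⟩
        · have hstep : greedyStep r x = (r.1, r.2.1, r.2.2 + x) := by
            rw [greedyStep, if_neg h1, if_neg h2]
          push_neg at h2
          have hca : r.2.2 ≤ r.1 := by
            rcases not_and_or.mp h1 with h | h <;> push_neg at h <;> linarith
          have hlt : r.2.2 + x < 3/8 := by
            by_contra hge
            push_neg at hge
            exact hno2 ⟨x :: lc, la ++ lb, hperm' _ (perm_last x la lb lc),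
              by simp [hLc]; linarith,
              by simp [hLa, hLb]; linarith⟩
          exact ⟨la, lb, x :: lc, hperm' _ List.perm_middle, by simp [hg, hstep, hLa],
            by simp [hg, hstep, hLb], by simp [hg, hstep, hLc]; ring,
            by rw [hg, hstep]; exact ha, by rw [hg, hstep]; exact hb, by rw [hg, hstep]; exact hlt⟩
    · -- x > 3/16 : every element exceeds 3/16
      push_neg at hx16
      have hall : ∀ y ∈ ys ++ [x], 3/16 < y := by
        intro y hy
        rcases List.mem_append.mp hy with hy | hy
        · exact lt_of_lt_of_le hx16 (hsort'.2 y hy)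
        · simp at hy; subst hy; exact hx16
      match ys with
      | [] => exact good_small _ (by simp) (fun y hy => lt_trans (by norm_num) (hall y hy)) hsmall
      | [a] => exact good_small _ (by simp) (fun y hy => lt_trans (by norm_num) (hall y hy)) hsmall
      | [a, b] =>
        exact good_small _ (by simp) (fun y hy => lt_trans (by norm_num) (hall y hy)) hsmall
      | a :: b :: c :: rest =>
        exfalso
        apply hno2
        refine ⟨[a, b], c :: (rest ++ [x]), by simp, ?_, ?_⟩
        · have h1 := hall a (by simp); have h2 := hall b (by simp)
          simp; linarith
        · have hcc := hall c (by simp)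
          have hrest : 0 ≤ rest.sum := List.sum_nonneg (fun y hy => hnn y (by simp [hy]))
          simp; linarith

/-- If a finite collection of nonnegative reals, each strictly less than 3/8,
admits no 2-partition with both parts summing to at least 3/8, then the greedy 3-bin
procedure applied in nonincreasing order produces three bins each of total sum < 3/8. -/
theorem greedy_three_bins (xs : List ℝ)
    (hsorted : xs.Pairwise (fun a b => b ≤ a))
    (hnn : ∀ x ∈ xs, 0 ≤ x)
    (hsmall : ∀ x ∈ xs, x < 3 / 8)
    (hno2 : ¬ ∃ s t : List ℝ, (s ++ t).Perm xs ∧ 3 / 8 ≤ s.sum ∧ 3 / 8 ≤ t.sum) :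
    (greedy xs).1 < 3 / 8 ∧ (greedy xs).2.1 < 3 / 8 ∧ (greedy xs).2.2 < 3 / 8 := by
  obtain ⟨_, _, _, _, _, _, _, h1, h2, h3⟩ := good_main xs hsorted hnn hsmall hno2
  exact ⟨h1, h2, h3⟩
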